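/- Fix 0≤q<1. The map (x,y) ↦ (φ₊(x,y), φ₋(x,y)) is a bijection from {(x,y)∈ℝ² : x>0, y≥0} onto {(u,w)∈ℝ² : u≥0, −1<w≤0}. Consequently, (α,β,γ,δ) ↦ (a,b,c,d) = (φ₊(α,γ), φ₊(β,δ), φ₋(α,γ), φ₋(β,δ)) is a bijection from {α,β>0, γ,δ≥0} onto {a,b≥0, −1<c,d≤0}. -/

import Mathlib

/-- `φ₊(x,y) = (1/(2x))(1-q-x+y + √((1-q-x+y)² + 4xy))`. -/
noncomputable def phiPlus (q x y : ℝ) : ℝ :=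
  (1 / (2 * x)) * (1 - q - x + y + Real.sqrt ((1 - q - x + y) ^ 2 + 4 * x * y))

/-- `φ₋(x,y) = (1/(2x))(1-q-x+y - √((1-q-x+y)² + 4xy))`. -/
noncomputable def phiMinus (q x y : ℝ) : ℝ :=
  (1 / (2 * x)) * (1 - q - x + y - Real.sqrt ((1 - q - x + y) ^ 2 + 4 * x * y))

/-- First component of the inverse map. -/
noncomputable def psi1 (q u w : ℝ) : ℝ := (1 - q) / ((1 + u) * (1 + w))

/-- Second component of the inverse map. -/
noncomputable def psi2 (q u w : ℝ) : ℝ := -(psi1 q u w * u * w)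

lemma phi_fw (q : ℝ) (hq1 : q < 1) {x y : ℝ} (hx : 0 < x) (hy : 0 ≤ y) :
    0 ≤ phiPlus q x y ∧ -1 < phiMinus q x y ∧ phiMinus q x y ≤ 0 := by
  have hD : (0:ℝ) ≤ (1 - q - x + y) ^ 2 + 4 * x * y := by positivity
  have hr0 : 0 ≤ Real.sqrt ((1 - q - x + y) ^ 2 + 4 * x * y) := Real.sqrt_nonneg _
  have habs : |1 - q - x + y| ≤ Real.sqrt ((1 - q - x + y) ^ 2 + 4 * x * y) := by
    rw [← Real.sqrt_sq_eq_abs]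
    exact Real.sqrt_le_sqrt (by nlinarith)
  have hsle : -Real.sqrt ((1 - q - x + y) ^ 2 + 4 * x * y) ≤ 1 - q - x + y := by
    have := neg_abs_le (1 - q - x + y); linarith
  have hsle' : 1 - q - x + y ≤ Real.sqrt ((1 - q - x + y) ^ 2 + 4 * x * y) :=
    le_trans (le_abs_self _) habs
  have hlt : Real.sqrt ((1 - q - x + y) ^ 2 + 4 * x * y) < (1 - q - x + y) + 2 * x := by
    rw [Real.sqrt_lt' (by linarith)]
    nlinarith [mul_pos hx (by linarith : (0:ℝ) < 1 - q)]
  have h2x : (0:ℝ) < 2 * x := by linarith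
  have hplus : phiPlus q x y
      = ((1 - q - x + y) + Real.sqrt ((1 - q - x + y) ^ 2 + 4 * x * y)) / (2 * x) := by
    rw [phiPlus]; ring
  have hminus : phiMinus q x y
      = ((1 - q - x + y) - Real.sqrt ((1 - q - x + y) ^ 2 + 4 * x * y)) / (2 * x) := by
    rw [phiMinus]; ring
  refine ⟨?_, ?_, ?_⟩
  · rw [hplus]; exact div_nonneg (by linarith) (by linarith)
  · rw [hminus, lt_div_iff₀ h2x]; linarith
  · rw [hminus]
    exact div_nonpos_iff.mpr (Or.inr ⟨by linarith, by linarith⟩)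

lemma alg1 (x y s r : ℝ) (hx : x ≠ 0) (hr2 : r ^ 2 = s ^ 2 + 4 * x * y) :
    (1 + (s + r) / (2 * x)) * (1 + (s - r) / (2 * x)) * x = s + x - y := by
  field_simp
  ring_nf
  linear_combination (norm := ring_nf) (-1) * hr2

lemma alg2 (x y s r : ℝ) (hx : x ≠ 0) (hr2 : r ^ 2 = s ^ 2 + 4 * x * y) :
    x * ((s + r) / (2 * x) * ((s - r) / (2 * x))) = -y := by
  field_simp
  linear_combination (-1) * hr2

lemma phi_li (q : ℝ) (hq1 : q < 1) {x y : ℝ} (hx : 0 < x) (hy : 0 ≤ y) :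
    psi1 q (phiPlus q x y) (phiMinus q x y) = x ∧
    psi2 q (phiPlus q x y) (phiMinus q x y) = y := by
  have hD : (0:ℝ) ≤ (1 - q - x + y) ^ 2 + 4 * x * y := by positivity
  have hr2 : Real.sqrt ((1 - q - x + y) ^ 2 + 4 * x * y) ^ 2
      = (1 - q - x + y) ^ 2 + 4 * x * y := Real.sq_sqrt hD
  have hplus : phiPlus q x y
      = ((1 - q - x + y) + Real.sqrt ((1 - q - x + y) ^ 2 + 4 * x * y)) / (2 * x) := by
    rw [phiPlus]; ring
  have hminus : phiMinus q x y
      = ((1 - q - x + y) - Real.sqrt ((1 - q - x + y) ^ 2 + 4 * x * y)) / (2 * x) := by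
    rw [phiMinus]; ring
  have hq : (0:ℝ) < 1 - q := by linarith
  have key : (1 + phiPlus q x y) * (1 + phiMinus q x y) * x = 1 - q := by
    rw [hplus, hminus]
    have := alg1 x y (1 - q - x + y) _ hx.ne' hr2
    linarith
  have hne : (1 + phiPlus q x y) * (1 + phiMinus q x y) ≠ 0 := by
    intro h
    rw [h, zero_mul] at key
    linarith
  have h1 : psi1 q (phiPlus q x y) (phiMinus q x y) = x := by
    rw [psi1, div_eq_iff hne]
    linear_combination -key
  refine ⟨h1, ?_⟩
  have hprod : x * (phiPlus q x y * phiMinus q x y) = -y := by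
    rw [hplus, hminus]
    exact alg2 x y (1 - q - x + y) _ hx.ne' hr2
  rw [psi2, h1]
  linear_combination -hprod

lemma phi_ri_aux (q : ℝ) {u w x y : ℝ} (hu : 0 ≤ u) (hw0 : w ≤ 0)
    (hx : 0 < x) (hyx : y = -(x * u * w))
    (hx1q : x * ((1 + u) * (1 + w)) = 1 - q) :
    phiPlus q x y = u ∧ phiMinus q x y = w := by
  have hs : 1 - q - x + y = x * (u + w) := by
    rw [hyx]; linear_combination -hx1q
  have hDsq : (1 - q - x + y) ^ 2 + 4 * x * y = (x * (u - w)) ^ 2 := by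
    rw [hs, hyx]; ring
  have hsqrt : Real.sqrt ((1 - q - x + y) ^ 2 + 4 * x * y) = x * (u - w) := by
    rw [hDsq]
    exact Real.sqrt_sq (by nlinarith)
  constructor
  · rw [phiPlus, hsqrt, hs]
    field_simp
    ring
  · rw [phiMinus, hsqrt, hs]
    field_simp
    ring

lemma phi_ri (q : ℝ) (hq1 : q < 1) {u w : ℝ} (hu : 0 ≤ u) (hw1 : -1 < w)
    (hw0 : w ≤ 0) :
    0 < psi1 q u w ∧ 0 ≤ psi2 q u w ∧
    phiPlus q (psi1 q u w) (psi2 q u w) = u ∧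
    phiMinus q (psi1 q u w) (psi2 q u w) = w := by
  have hq : (0:ℝ) < 1 - q := by linarith
  have h1u : (0:ℝ) < 1 + u := by linarith
  have h1w : (0:ℝ) < 1 + w := by linarith
  have hx : 0 < psi1 q u w := by rw [psi1]; positivity
  have hyx : psi2 q u w = -(psi1 q u w * u * w) := rfl
  have hy : 0 ≤ psi2 q u w := by
    rw [hyx]
    have : psi1 q u w * u * w ≤ 0 :=
      mul_nonpos_of_nonneg_of_nonpos (by positivity) hw0
    linarith
  have hP : ((1 + u) * (1 + w)) ≠ 0 := by positivity
  have hx1q : psi1 q u w * ((1 + u) * (1 + w)) = 1 - q := by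
    rw [psi1, div_mul_cancel₀ _ hP]
  obtain ⟨h3, h4⟩ := phi_ri_aux q hu hw0 hx hyx hx1q
  exact ⟨hx, hy, h3, h4⟩

theorem stmt2 (q : ℝ) (hq0 : 0 ≤ q) (hq1 : q < 1) :
    Set.BijOn (fun p : ℝ × ℝ => (phiPlus q p.1 p.2, phiMinus q p.1 p.2))
      {p : ℝ × ℝ | 0 < p.1 ∧ 0 ≤ p.2}
      {w : ℝ × ℝ | 0 ≤ w.1 ∧ -1 < w.2 ∧ w.2 ≤ 0} ∧
    Set.BijOn
      (fun r : (ℝ × ℝ) × (ℝ × ℝ) =>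
        ((phiPlus q r.1.1 r.2.1, phiPlus q r.1.2 r.2.2),
         (phiMinus q r.1.1 r.2.1, phiMinus q r.1.2 r.2.2)))
      {r : (ℝ × ℝ) × (ℝ × ℝ) | 0 < r.1.1 ∧ 0 < r.1.2 ∧ 0 ≤ r.2.1 ∧ 0 ≤ r.2.2}
      {s : (ℝ × ℝ) × (ℝ × ℝ) | 0 ≤ s.1.1 ∧ 0 ≤ s.1.2 ∧
        (-1 < s.2.1 ∧ s.2.1 ≤ 0) ∧ (-1 < s.2.2 ∧ s.2.2 ≤ 0)} := by
  constructor
  · apply Set.InvOn.bijOn (f' := fun w : ℝ × ℝ => (psi1 q w.1 w.2, psi2 q w.1 w.2))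
    · constructor
      · rintro ⟨x, y⟩ ⟨hx, hy⟩
        obtain ⟨h1, h2⟩ := phi_li q hq1 hx hy
        simp only [Prod.mk.injEq]
        exact ⟨h1, h2⟩
      · rintro ⟨u, w⟩ ⟨hu, hw1, hw0⟩
        obtain ⟨_, _, h3, h4⟩ := phi_ri q hq1 hu hw1 hw0
        simp only [Prod.mk.injEq]
        exact ⟨h3, h4⟩
    · rintro ⟨x, y⟩ ⟨hx, hy⟩
      exact phi_fw q hq1 hx hy
    · rintro ⟨u, w⟩ ⟨hu, hw1, hw0⟩
      obtain ⟨h1, h2, _, _⟩ := phi_ri q hq1 hu hw1 hw0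
      exact ⟨h1, h2⟩
  · apply Set.InvOn.bijOn (f' := fun s : (ℝ × ℝ) × (ℝ × ℝ) =>
      ((psi1 q s.1.1 s.2.1, psi1 q s.1.2 s.2.2),
       (psi2 q s.1.1 s.2.1, psi2 q s.1.2 s.2.2)))
    · constructor
      · rintro ⟨⟨a, b⟩, ⟨c, d⟩⟩ ⟨ha, hb, hc, hd⟩
        obtain ⟨h1, h2⟩ := phi_li q hq1 ha hc
        obtain ⟨h3, h4⟩ := phi_li q hq1 hb hd
        simp only [Prod.mk.injEq]
        exact ⟨⟨h1, h3⟩, h2, h4⟩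
      · rintro ⟨⟨a, b⟩, ⟨c, d⟩⟩ ⟨ha, hb, ⟨hc1, hc0⟩, ⟨hd1, hd0⟩⟩
        obtain ⟨_, _, h3, h4⟩ := phi_ri q hq1 ha hc1 hc0
        obtain ⟨_, _, h5, h6⟩ := phi_ri q hq1 hb hd1 hd0
        simp only [Prod.mk.injEq]
        exact ⟨⟨h3, h5⟩, h4, h6⟩
    · rintro ⟨⟨a, b⟩, ⟨c, d⟩⟩ ⟨ha, hb, hc, hd⟩
      obtain ⟨h1, h2, h3⟩ := phi_fw q hq1 ha hc
      obtain ⟨h4, h5, h6⟩ := phi_fw q hq1 hb hd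
      exact ⟨h1, h4, ⟨h2, h3⟩, ⟨h5, h6⟩⟩
    · rintro ⟨⟨a, b⟩, ⟨c, d⟩⟩ ⟨ha, hb, ⟨hc1, hc0⟩, ⟨hd1, hd0⟩⟩
      obtain ⟨h1, h2, _, _⟩ := phi_ri q hq1 ha hc1 hc0
      obtain ⟨h3, h4, _, _⟩ := phi_ri q hq1 hb hd1 hd0
      exact ⟨h1, h3, h2, h4⟩
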